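/- Assume P_{ij} > 0 and Q_{ii} > 0 for all i,j. Let (e, f, u) be a fluid model solution and fix (ē, f̄) ∈ ℰ with its associated (unique) vector ā ∈ [0,1]^r, and set m̄ = Σ_{i : ā_i = 1} ē_{ii}. Define V : 𝒯 → ℝ_{≥0} by V(x, y) = Σ_{i,j} |y_{ij} − f̄_{ij}| + Σ_{i ≠ j} |x_{ij} − ē_{ij}| + Σ_{i : ā_i < 1} x_{ii} + |m̄ − Σ_{i : ā_i = 1} x_{ii}|. Call t > 0 a regular point if each of the functions s ↦ e_{ii}(s) (for every i), s ↦ |f_{ij}(s) − f̄_{ij}| (for every i,j), s ↦ |e_{ij}(s) − ē_{ij}| (for every i ≠ j), and s ↦ |m̄ − Σ_{i : ā_i = 1} e_{ii}(s)| is differentiable at t. Then at every regular point t, the function s ↦ V(e(s), f(s)) is differentiable at t with derivative ≤ 0; moreover if (e(t), f(t)) ∉ ℰ then this derivative is strictly negative. -/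

import Mathlib

open Finset Filter Topology MeasureTheory intervalIntegral

abbrev Mat (r : ℕ) := Fin r → Fin r → ℝ

structure NetParams (r : ℕ) where
  lam : Fin r → ℝ
  mu : Mat r
  P : Mat r
  lam_pos : ∀ i, 0 < lam i
  mu_pos : ∀ i j, 0 < mu i j
  P_nonneg : ∀ i j, 0 ≤ P i j
  P_rowsum : ∀ i, ∑ j, P i j = 1

def IsRouting {r : ℕ} (q : Mat r) : Prop :=
  (∀ i j, 0 ≤ q i j) ∧ ∀ i, ∑ j, q i j = 1

def MemT {r : ℕ} (e f : Mat r) : Prop :=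
  (∀ i j, e i j ∈ Set.Icc (0:ℝ) 1) ∧ (∀ i j, f i j ∈ Set.Icc (0:ℝ) 1) ∧
    (∑ i, ∑ j, (e i j + f i j)) = 1

open scoped Classical in
/-- The Lebesgue–Stieltjes measure associated with a non-decreasing `g : ℝ → ℝ`
(junk value `0` if `g` is not monotone). -/
noncomputable def lsMeasure (g : ℝ → ℝ) : Measure ℝ :=
  if h : Monotone g then h.stieltjesFunction.measure else 0

/-- A fluid model solution `(e, f, u)` for the ridesharing network with static
routing matrix `Q`.  All functions are defined on `ℝ`, but only their values
on `[0, ∞)` are relevant; `u` is extended by `0` on `(-∞, 0]`. -/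
structure IsFluidSol {r : ℕ} (np : NetParams r) (Q : Mat r) (e f : ℝ → Mat r)
    (u : ℝ → Fin r → ℝ) : Prop where
  cont_e : ∀ i j, ContinuousOn (fun t => e t i j) (Set.Ici 0)
  cont_f : ∀ i j, ContinuousOn (fun t => f t i j) (Set.Ici 0)
  mem_T : ∀ t, 0 ≤ t → MemT (e t) (f t)
  u_nonneg : ∀ t i, 0 ≤ u t i
  u_mono : ∀ i, Monotone fun t => u t i
  u_zero : ∀ i, ∀ t ≤ (0:ℝ), u t i = 0
  eq_f : ∀ i j, ∀ t, 0 ≤ t →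
    f t i j = f 0 i j + np.lam i * np.P i j * (t - u t i)
      - np.mu i j * ∫ s in (0:ℝ)..t, f s i j
  eq_e_off : ∀ i j, i ≠ j → ∀ t, 0 ≤ t →
    e t i j = e 0 i j - np.mu i j * (∫ s in (0:ℝ)..t, e s i j)
      + Q i j * ∑ k, np.mu k i * ∫ s in (0:ℝ)..t, f s k i
  eq_e_diag : ∀ i, ∀ t, 0 ≤ t →
    e t i i = e 0 i i - np.lam i * (t - u t i)
      + (∑ j ∈ Finset.univ.filter (fun j => j ≠ i), np.mu j i * ∫ s in (0:ℝ)..t, e s j i)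
      + Q i i * ∑ j, np.mu j i * ∫ s in (0:ℝ)..t, f s j i
  compl : ∀ i, ∫⁻ s in Set.Ici (0:ℝ),
      ENNReal.ofReal (e s i i) ∂(lsMeasure fun t => u t i) = 0

open scoped Classical in
/-- The equilibrium set ℰ associated to the routing matrix `Q`. -/
noncomputable def eqSet {r : ℕ} (np : NetParams r) (Q : Mat r) : Set (Mat r × Mat r) :=
  {p | MemT p.1 p.2 ∧ ∃ a : Fin r → ℝ, (∀ i, 0 ≤ a i ∧ a i ≤ 1) ∧
    (∀ i j, np.lam i * np.P i j * a i = np.mu i j * p.2 i j) ∧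
    (∀ i j, i ≠ j → np.mu i j * p.1 i j = Q i j * ∑ k, np.mu k i * p.2 k i) ∧
    (∀ i, np.lam i * a i =
      (∑ k ∈ Finset.univ.filter (fun k => k ≠ i), np.mu k i * p.1 k i)
        + Q i i * ∑ k, np.mu k i * p.2 k i) ∧
    (∀ i, (1 - a i) * p.1 i i = 0)}

/-- The Lyapunov function `V` built from the equilibrium point `(ē, f̄)`, its
associated availability vector `ā` and the mass `m̄ = Σ_{i : ā_i = 1} ē_{ii}`. -/
noncomputable def lyapV {r : ℕ} (ebar fbar : Mat r) (abar : Fin r → ℝ)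
    (x y : Mat r) : ℝ :=
  (∑ i, ∑ j, |y i j - fbar i j|)
    + (∑ i, ∑ j ∈ Finset.univ.filter (fun j => j ≠ i), |x i j - ebar i j|)
    + (∑ i ∈ Finset.univ.filter (fun i => abar i < 1), x i i)
    + |(∑ i ∈ Finset.univ.filter (fun i => abar i = 1), ebar i i)
        - ∑ i ∈ Finset.univ.filter (fun i => abar i = 1), x i i|

/-- Lemma 4: at every regular point `t > 0`, the Lyapunov function
`s ↦ V(e(s), f(s))` is differentiable with nonpositive derivative, strictly
negative whenever `(e(t), f(t)) ∉ ℰ`. -/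

lemma sign_mul_self' (x : ℝ) : Real.sign x * x = |x| := by
  rcases lt_trichotomy x 0 with h|h|h
  · rw [Real.sign_of_neg h, abs_of_neg h]; ring
  · simp [h]
  · rw [Real.sign_of_pos h, abs_of_pos h]; ring

lemma abs_sign_le' (x : ℝ) : |Real.sign x| ≤ 1 := by
  rcases lt_trichotomy x 0 with h|h|h
  · rw [Real.sign_of_neg h]; norm_num
  · simp [h]
  · rw [Real.sign_of_pos h]; norm_num

lemma sign_eq_neg_one_imp' {x : ℝ} (h : Real.sign x = -1) : x < 0 := by
  rcases lt_trichotomy x 0 with h'|h'|h'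
  · exact h'
  · simp [h'] at h
  · rw [Real.sign_of_pos h'] at h; norm_num at h

lemma sign_eq_one_imp' {x : ℝ} (h : Real.sign x = 1) : 0 < x := by
  rcases lt_trichotomy x 0 with h'|h'|h'
  · rw [Real.sign_of_neg h'] at h; norm_num at h
  · simp [h'] at h
  · exact h'

/-- FTC at a point in the interior of the domain of continuity. -/
lemma ftc_deriv' {g : ℝ → ℝ} (hg : ContinuousOn g (Set.Ici 0)) {t : ℝ} (ht : 0 < t) :
    HasDerivAt (fun s => ∫ x in (0:ℝ)..s, g x) (g t) t := by
  have hIci : Set.Ici (0:ℝ) ∈ 𝓝 t := Ici_mem_nhds ht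
  have hca : ContinuousAt g t := (hg t (le_of_lt ht)).continuousAt hIci
  refine intervalIntegral.integral_hasDerivAt_right ?_ ⟨Set.Ici 0, hIci, hg.aestronglyMeasurable measurableSet_Ici⟩ hca
  exact (hg.mono (by rw [Set.uIcc_of_le ht.le]; exact fun x hx => hx.1)).intervalIntegrable

/-- Derivative of monotone function is nonneg. -/
lemma mono_hasDerivAt_nonneg' {u : ℝ → ℝ} (hu : Monotone u) {d t : ℝ}
    (h : HasDerivAt u d t) : 0 ≤ d := by
  have h1 : Tendsto (slope u t) (𝓝[>] t) (𝓝 d) :=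
    (hasDerivAt_iff_tendsto_slope.1 h).mono_left (nhdsWithin_mono _ (fun x hx => ne_of_gt hx))
  refine le_of_tendsto_of_tendsto tendsto_const_nhds h1 ?_
  filter_upwards [self_mem_nhdsWithin] with y hy
  have h2 : (0:ℝ) < y - t := sub_pos.2 hy
  have h3 : u t ≤ u y := hu hy.le
  rw [slope_def_field]
  exact div_nonneg (by linarith) h2.le

/-- derivative of |g| given differentiability of both. -/
lemma abs_hasDerivAt' {g : ℝ → ℝ} {g' t : ℝ} (hg : HasDerivAt g g' t)
    (ha : DifferentiableAt ℝ (fun s => |g s|) t) :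
    HasDerivAt (fun s => |g s|) (Real.sign (g t) * g') t := by
  rcases lt_trichotomy (g t) 0 with h|h|h
  · rw [Real.sign_of_neg h]
    have hev : (fun s => |g s|) =ᶠ[𝓝 t] fun s => -g s := by
      filter_upwards [hg.continuousAt.eventually_lt_const h] with s hs
      exact abs_of_neg hs
    have := hg.neg.congr_of_eventuallyEq hev
    rw [show (-1:ℝ) * g' = -g' by ring]; exact this
  · have h0 : IsLocalMin (fun s => |g s|) t := by
      show ∀ᶠ s in 𝓝 t, |g t| ≤ |g s|
      filter_upwards with s
      rw [h]; simp [abs_nonneg]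
    have hz := h0.deriv_eq_zero
    have hd : HasDerivAt (fun s => |g s|) (deriv (fun s => |g s|) t) t := ha.hasDerivAt
    rw [hz] at hd
    simpa [h, Real.sign_zero] using hd
  · rw [Real.sign_of_pos h]
    have hev : (fun s => |g s|) =ᶠ[𝓝 t] g := by
      filter_upwards [hg.continuousAt.eventually_const_lt h] with s hs
      exact abs_of_pos hs
    have := hg.congr_of_eventuallyEq hev
    rw [one_mul]; exact this

lemma hasDerivAt_zero_of_lintegral_zero {u E : ℝ → ℝ} (hu : Monotone u) {t : ℝ} (ht : 0 < t)
    (hE : ContinuousAt E t) (hEt : 0 < E t)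
    (hint : ∫⁻ s in Set.Ici (0:ℝ), ENNReal.ofReal (E s) ∂hu.stieltjesFunction.measure = 0) :
    HasDerivAt u 0 t := by
  have h1 : ∀ᶠ s in 𝓝 t, E t / 2 < E s := hE.eventually_const_lt (by linarith)
  have h2 : ∀ᶠ s in 𝓝 t, 0 < s := eventually_gt_nhds ht
  obtain ⟨ε, hε, hball⟩ := Metric.eventually_nhds_iff_ball.1 (h1.and h2)
  set a := t - ε with ha
  set b := t + ε with hb
  have hIoo : ∀ s ∈ Set.Ioo a b, E t / 2 < E s ∧ 0 < s := by
    intro s hs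
    exact hball s (by rw [Real.ball_eq_Ioo]; exact hs)
  have htIoo : t ∈ Set.Ioo a b := by constructor <;> [simp [ha]; simp [hb]] <;> linarith
  -- the measure of Ioo a b is zero
  have hμ0 : hu.stieltjesFunction.measure (Set.Ioo a b) = 0 := by
    by_contra hne
    have hsub : Set.Ioo a b ⊆ Set.Ici (0:ℝ) := fun s hs => (hIoo s hs).2.le
    have hmono : ∫⁻ s in Set.Ioo a b, ENNReal.ofReal (E s) ∂hu.stieltjesFunction.measure
        ≤ ∫⁻ s in Set.Ici (0:ℝ), ENNReal.ofReal (E s) ∂hu.stieltjesFunction.measure :=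
      lintegral_mono_set hsub
    have hlow : ∫⁻ _ in Set.Ioo a b, ENNReal.ofReal (E t / 2) ∂hu.stieltjesFunction.measure
        ≤ ∫⁻ s in Set.Ioo a b, ENNReal.ofReal (E s) ∂hu.stieltjesFunction.measure := by
      refine lintegral_mono_ae ?_
      rw [ae_restrict_iff' measurableSet_Ioo]
      filter_upwards with s hs
      exact ENNReal.ofReal_le_ofReal (hIoo s hs).1.le
    rw [MeasureTheory.lintegral_const, Measure.restrict_apply_univ] at hlow
    rw [hint] at hmono
    have : ENNReal.ofReal (E t / 2) * hu.stieltjesFunction.measure (Set.Ioo a b) = 0 :=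
      le_antisymm (le_trans hlow hmono) zero_le
    rcases mul_eq_zero.1 this with h | h
    · rw [ENNReal.ofReal_eq_zero] at h; linarith
    · exact hne h
  -- u is constant on Ioo a b
  have hle : ∀ p ∈ Set.Ioo a b, ∀ q ∈ Set.Ioo a b, u p ≤ u q := by
    intro p hp q hq
    set m := (a + min p q) / 2 with hm
    have hma : a < m := by
      have : a < min p q := lt_min hp.1 hq.1
      rw [hm]; linarith
    have hmp : m < p := by
      have h1 : min p q ≤ p := min_le_left _ _
      have : a < min p q := lt_min hp.1 hq.1
      rw [hm]; linarith
    have hmq : m < q := by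
      have h1 : min p q ≤ q := min_le_right _ _
      have : a < min p q := lt_min hp.1 hq.1
      rw [hm]; linarith
    have hFpm : (hu.stieltjesFunction) p ≤ hu.stieltjesFunction m := by
      have hsub : Set.Ioc m p ⊆ Set.Ioo a b := fun z hz =>
        ⟨lt_of_lt_of_le hma hz.1.le, lt_of_le_of_lt hz.2 hp.2⟩
      have h0 : hu.stieltjesFunction.measure (Set.Ioc m p) = 0 :=
        measure_mono_null hsub hμ0
      rw [StieltjesFunction.measure_Ioc] at h0
      rw [ENNReal.ofReal_eq_zero] at h0
      linarith
    have h1 : u p ≤ hu.stieltjesFunction p := by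
      rw [hu.stieltjesFunction_eq]
      exact hu.le_rightLim le_rfl
    have h2 : (hu.stieltjesFunction) m ≤ u q := by
      rw [hu.stieltjesFunction_eq]
      exact hu.rightLim_le hmq
    linarith
  have hev : u =ᶠ[𝓝 t] fun _ => u t := by
    filter_upwards [Ioo_mem_nhds htIoo.1 htIoo.2] with s hs
    exact le_antisymm (hle s hs t htIoo) (hle t htIoo s hs)
  exact (hasDerivAt_const t (u t)).congr_of_eventuallyEq hev

lemma tight_entry {ι : Type*} {s : Finset ι} {c v : ι → ℝ} {A : ℝ} (hA : |A| ≤ 1)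
    (hc : ∀ i ∈ s, 0 < c i)
    (h : A * (∑ i ∈ s, c i * v i) - ∑ i ∈ s, c i * |v i| = 0) :
    ∀ i ∈ s, A * v i = |v i| := by
  have key : ∑ i ∈ s, c i * (A * v i - |v i|) = 0 := by
    rw [← h, Finset.mul_sum, ← Finset.sum_sub_distrib]
    exact Finset.sum_congr rfl (fun i _ => by ring)
  have hnp : ∀ i ∈ s, c i * (A * v i - |v i|) ≤ 0 := by
    intro i hi
    apply mul_nonpos_of_nonneg_of_nonpos (hc i hi).le
    have h1 : A * v i ≤ |A * v i| := le_abs_self _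
    rw [abs_mul] at h1
    have h2 : |A| * |v i| ≤ 1 * |v i| :=
      mul_le_mul_of_nonneg_right hA (abs_nonneg _)
    linarith
  have hall := (Finset.sum_eq_zero_iff_of_nonpos hnp).1 key
  intro i hi
  rcases mul_eq_zero.1 (hall i hi) with h4 | h4
  · exact absurd h4 (hc i hi).ne'
  · linarith

lemma coeff_sign {A q K c : ℝ} (hq : 0 < q) (hK : |K| ≤ 1 - q) (hA : |A| ≤ 1)
    (hval : (A * q + K) * c = |c|) (hc : c ≠ 0) :
    (A = 1 ∧ 0 < c) ∨ (A = -1 ∧ c < 0) := by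
  rw [abs_le] at hK hA
  rcases lt_or_gt_of_ne hc with h | h
  · right
    refine ⟨?_, h⟩
    rw [abs_of_neg h] at hval
    have hG : A * q + K = -1 :=
      mul_right_cancel₀ hc (by linarith [hval] : (A * q + K) * c = (-1) * c)
    have h1 : A * q ≤ -1 * q := by linarith [hK.1]
    have h2 : A ≤ -1 := le_of_mul_le_mul_right h1 hq
    linarith [hA.1]
  · left
    refine ⟨?_, h⟩
    rw [abs_of_pos h] at hval
    have hG : A * q + K = 1 :=
      mul_right_cancel₀ hc (by linarith [hval] : (A * q + K) * c = 1 * c)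
    have h1 : 1 * q ≤ A * q := by linarith [hK.2]
    have h2 : 1 ≤ A := le_of_mul_le_mul_right h1 hq
    linarith [hA.2]

lemma row_all_sign {ι : Type*} [Fintype ι] {P sf : ι → ℝ} {c : ℝ}
    (hP : ∀ j, 0 < P j) (hsum : ∑ j, P j = 1) (hle : ∀ j, |sf j| ≤ 1)
    (hc : c = 1 ∨ c = -1) (hS : ∑ j, P j * sf j = c) : ∀ j, sf j = c := by
  have hc2 : c * c = 1 := by rcases hc with h|h <;> rw [h] <;> norm_num
  have habsc : |c| = 1 := by rcases hc with h|h <;> rw [h] <;> norm_num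
  have key : ∑ j, P j * (1 - c * sf j) = 0 := by
    have h0 : ∑ j, P j * (1 - c * sf j) = (∑ j, P j) - c * ∑ j, P j * sf j := by
      rw [Finset.mul_sum, ← Finset.sum_sub_distrib]
      exact Finset.sum_congr rfl (fun j _ => by ring)
    rw [h0, hsum, hS, hc2]; ring
  have hnn : ∀ j ∈ Finset.univ, (0:ℝ) ≤ P j * (1 - c * sf j) := by
    intro j _
    apply mul_nonneg (hP j).le
    have h1 : c * sf j ≤ |c * sf j| := le_abs_self _
    rw [abs_mul, habsc, one_mul] at h1
    linarith [hle j]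
  have hall := (Finset.sum_eq_zero_iff_of_nonneg hnn).1 key
  intro j
  rcases mul_eq_zero.1 (hall j (Finset.mem_univ j)) with h4 | h4
  · exact absurd h4 (hP j).ne'
  · have h5 : c * sf j = 1 := by linarith
    have h6 : c * (c * sf j) = c * 1 := by rw [h5]
    rw [← mul_assoc, hc2, one_mul, mul_one] at h6
    exact h6

lemma abs_mul_le' {a b A B : ℝ} (ha : |a| ≤ A) (hb : |b| ≤ B) : a * b ≤ A * B := by
  calc a * b ≤ |a * b| := le_abs_self _
  _ = |a| * |b| := abs_mul _ _
  _ ≤ A * B := mul_le_mul ha hb (abs_nonneg _) (le_trans (abs_nonneg a) ha)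

lemma station_nonpos {Δ S W Wh R Rh K θ q : ℝ}
    (hW : |W| ≤ Wh) (hR : |R| ≤ Rh) (hS : |S| ≤ 1) (hK : |K| ≤ 1 - q)
    (hθ : |θ| ≤ 1) (hq : 0 < q)
    (hcase : (Δ ≤ 0 ∧ (θ = 1 ∨ Δ = 0)) ∨ (Δ + R + q * W = 0)) :
    -Δ * S - Wh - Rh + W * K + θ * (Δ + R + q * W) ≤ 0 := by
  have hWh : 0 ≤ Wh := le_trans (abs_nonneg W) hW
  have hKθq : |K + θ * q| ≤ 1 := by
    calc |K + θ * q| ≤ |K| + |θ * q| := abs_add_le _ _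
    _ = |K| + |θ| * q := by rw [abs_mul, abs_of_pos hq]
    _ ≤ (1 - q) + 1 * q := add_le_add hK (mul_le_mul_of_nonneg_right hθ hq.le)
    _ = 1 := by ring
  have h2 : W * (K + θ * q) ≤ Wh := by
    have := abs_mul_le' hW hKθq; linarith [this]
  rcases hcase with ⟨hΔ, hθc⟩ | hzero
  · have h1 : θ * R ≤ Rh := by have := abs_mul_le' hθ hR; linarith [this]
    have h3 : Δ * (θ - S) ≤ 0 := by
      rcases hθc with h | h
      · rw [h]
        apply mul_nonpos_of_nonpos_of_nonneg hΔ
        rw [abs_le] at hS; linarith [hS.2]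
      · rw [h, zero_mul]
    nlinarith [h1, h2, h3]
  · have hSθq : |K + S * q| ≤ 1 := by
      calc |K + S * q| ≤ |K| + |S * q| := abs_add_le _ _
      _ = |K| + |S| * q := by rw [abs_mul, abs_of_pos hq]
      _ ≤ (1 - q) + 1 * q := add_le_add hK (mul_le_mul_of_nonneg_right hS hq.le)
      _ = 1 := by ring
    have h2' : W * (K + S * q) ≤ Wh := by
      have := abs_mul_le' hW hSθq; linarith [this]
    have h1 : S * R ≤ Rh := by have := abs_mul_le' hS hR; linarith [this]
    have hΔ : Δ = -(R + q * W) := by linarith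
    have hkey : -Δ * S - Wh - Rh + W * K + θ * (Δ + R + q * W)
        = (S * R - Rh) + (W * (K + S * q) - Wh) + θ * (Δ + (R + q * W)) := by
      rw [hΔ]; ring
    rw [hkey, hΔ]
    have hz : -(R + q * W) + (R + q * W) = 0 := by ring
    rw [hz, mul_zero]
    linarith

lemma sum_offdiag_comm {r : ℕ} (F : Fin r → Fin r → ℝ) :
    ∑ i, ∑ j ∈ Finset.univ.filter (fun j => j ≠ i), F i j
      = ∑ i, ∑ j ∈ Finset.univ.filter (fun j => j ≠ i), F j i := by
  have h1 : ∀ (G : Fin r → Fin r → ℝ), ∑ i, ∑ j ∈ Finset.univ.filter (fun j => j ≠ i), G i j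
      = ∑ i, ∑ j, if j ≠ i then G i j else 0 := by
    intro G
    refine Finset.sum_congr rfl (fun i _ => ?_)
    rw [Finset.sum_filter]
  rw [h1, h1, Finset.sum_comm]
  refine Finset.sum_congr rfl (fun i _ => Finset.sum_congr rfl (fun j _ => ?_))
  by_cases h : i = j
  · subst h; simp
  · rw [if_pos (Ne.symm h), if_pos h]

lemma filter_eq_of_le {r : ℕ} (abar : Fin r → ℝ) (hle : ∀ i, abar i ≤ 1) :
    Finset.univ.filter (fun i => ¬ abar i < 1) = Finset.univ.filter (fun i => abar i = 1) := by
  refine Finset.filter_congr (fun i _ => ?_)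
  constructor
  · intro h; simp only [not_lt] at h; exact le_antisymm (hle i) h
  · intro h; simp [h]

lemma sum_theta {r : ℕ} (abar : Fin r → ℝ) (hle : ∀ i, abar i ≤ 1) (de : Fin r → ℝ) (sm : ℝ) :
    ∑ i, (if abar i < 1 then (1:ℝ) else -sm) * de i
      = (∑ i ∈ Finset.univ.filter (fun i => abar i < 1), de i)
        + sm * (- ∑ i ∈ Finset.univ.filter (fun i => abar i = 1), de i) := by
  rw [← Finset.sum_filter_add_sum_filter_not Finset.univ (fun i => abar i < 1)]
  rw [filter_eq_of_le abar hle]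
  congr 1
  · refine Finset.sum_congr rfl (fun i hi => ?_)
    rw [if_pos (Finset.mem_filter.1 hi).2, one_mul]
  · rw [← Finset.sum_neg_distrib, Finset.mul_sum]
    refine Finset.sum_congr rfl (fun i hi => ?_)
    have h1 : abar i = 1 := (Finset.mem_filter.1 hi).2
    rw [if_neg (by rw [h1]; exact lt_irrefl 1)]
    ring

noncomputable section KeyDefs
variable {r : ℕ}

def colW (mu φ : Fin r → Fin r → ℝ) (i : Fin r) : ℝ := ∑ k, mu k i * φ k i
def colWh (mu φ : Fin r → Fin r → ℝ) (i : Fin r) : ℝ := ∑ k, mu k i * |φ k i|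
def colR (mu em : Fin r → Fin r → ℝ) (i : Fin r) : ℝ :=
  ∑ k ∈ Finset.univ.filter (fun k => k ≠ i), mu k i * em k i
def colRh (mu em : Fin r → Fin r → ℝ) (i : Fin r) : ℝ :=
  ∑ k ∈ Finset.univ.filter (fun k => k ≠ i), mu k i * |em k i|
def rowS (P φ : Fin r → Fin r → ℝ) (i : Fin r) : ℝ := ∑ j, P i j * Real.sign (φ i j)
def rowK (Q em : Fin r → Fin r → ℝ) (i : Fin r) : ℝ :=
  ∑ j ∈ Finset.univ.filter (fun j => j ≠ i), Q i j * Real.sign (em i j)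
def dE (lam : Fin r → ℝ) (mu Q : Fin r → Fin r → ℝ) (abar δ : Fin r → ℝ)
    (φ em : Fin r → Fin r → ℝ) (i : Fin r) : ℝ :=
  (lam i * abar i - δ i) + colR mu em i + Q i i * colW mu φ i

end KeyDefs


set_option maxHeartbeats 1600000 in
theorem key_alg {r : ℕ} (lam : Fin r → ℝ) (mu P Q : Fin r → Fin r → ℝ)
    (abar δ xd ebd : Fin r → ℝ) (φ em : Fin r → Fin r → ℝ)
    (hlam : ∀ i, 0 < lam i) (hmu : ∀ i j, 0 < mu i j)
    (hP : ∀ i j, 0 < P i j) (hProw : ∀ i, ∑ j, P i j = 1)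
    (hQrow : ∀ i, ∑ j, Q i j = 1) (hQ0 : ∀ i j, 0 ≤ Q i j) (hQd : ∀ i, 0 < Q i i)
    (habar : ∀ i, 0 ≤ abar i ∧ abar i ≤ 1)
    (hxd0 : ∀ i, 0 ≤ xd i) (hebd0 : ∀ i, 0 ≤ ebd i)
    (hebd : ∀ i, abar i < 1 → ebd i = 0)
    (hmass : (∑ i, ∑ j, φ i j) + (∑ i, ∑ j ∈ Finset.univ.filter (fun j => j ≠ i), em i j)
        + (∑ i, (xd i - ebd i)) = 0)
    (hδlam : ∀ i, 0 < xd i → δ i = lam i)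
    (hδle : ∀ i, δ i ≤ lam i)
    (hde0 : ∀ i, xd i = 0 → dE lam mu Q abar δ φ em i = 0)
    (d : ℝ)
    (hd : d = (∑ i, ∑ j, Real.sign (φ i j) * (-(mu i j * φ i j) - P i j * (lam i * abar i - δ i)))
      + (∑ i, ∑ j ∈ Finset.univ.filter (fun j => j ≠ i),
          Real.sign (em i j) * (-(mu i j * em i j) + Q i j * colW mu φ i))
      + (∑ i ∈ Finset.univ.filter (fun i => abar i < 1), dE lam mu Q abar δ φ em i)
      + Real.sign ((∑ i ∈ Finset.univ.filter (fun i => abar i = 1), ebd i)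
            - ∑ i ∈ Finset.univ.filter (fun i => abar i = 1), xd i)
          * (- ∑ i ∈ Finset.univ.filter (fun i => abar i = 1), dE lam mu Q abar δ φ em i)) :
    d ≤ 0 ∧ (d = 0 → (∀ i j, φ i j = 0) ∧ (∀ i j, i ≠ j → em i j = 0)
      ∧ (∀ i, lam i * abar i - δ i = 0)) := by
  classical
  set Mv : ℝ := ∑ i ∈ Finset.univ.filter (fun i => abar i = 1), xd i with hMv
  set mv : ℝ := ∑ i ∈ Finset.univ.filter (fun i => abar i = 1), ebd i with hmv
  set sm : ℝ := Real.sign (mv - Mv) with hsmdef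
  set θ : Fin r → ℝ := fun i => if abar i < 1 then 1 else -sm with hθdef
  set T : Fin r → ℝ := fun i =>
    -((lam i * abar i - δ i) * rowS P φ i) - colWh mu φ i - colRh mu em i
      + colW mu φ i * rowK Q em i + θ i * dE lam mu Q abar δ φ em i with hTdef
  -- basic bounds
  have hWle : ∀ i, |colW mu φ i| ≤ colWh mu φ i := by
    intro i
    refine le_trans (Finset.abs_sum_le_sum_abs _ _) (Finset.sum_le_sum (fun k _ => ?_))
    rw [abs_mul, abs_of_pos (hmu k i)]
  have hRle : ∀ i, |colR mu em i| ≤ colRh mu em i := by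
    intro i
    refine le_trans (Finset.abs_sum_le_sum_abs _ _) (Finset.sum_le_sum (fun k _ => ?_))
    rw [abs_mul, abs_of_pos (hmu k i)]
  have hSle : ∀ i, |rowS P φ i| ≤ 1 := by
    intro i
    refine le_trans (Finset.abs_sum_le_sum_abs _ _) ?_
    calc ∑ j, |P i j * Real.sign (φ i j)| ≤ ∑ j, P i j := by
          refine Finset.sum_le_sum (fun j _ => ?_)
          rw [abs_mul, abs_of_pos (hP i j)]
          have h1 := abs_sign_le' (φ i j)
          nlinarith [hP i j]
      _ = 1 := hProw i
  have hQsplit : ∀ i, ∑ j ∈ Finset.univ.filter (fun j => j ≠ i), Q i j = 1 - Q i i := by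
    intro i
    have h0 := Finset.sum_filter_add_sum_filter_not Finset.univ (fun j => j ≠ i) (Q i)
    have h1 : Finset.univ.filter (fun j : Fin r => ¬ j ≠ i) = {i} := by
      ext j; simp [not_not]
    rw [h1, Finset.sum_singleton, hQrow i] at h0
    linarith
  have hKle : ∀ i, |rowK Q em i| ≤ 1 - Q i i := by
    intro i
    refine le_trans (Finset.abs_sum_le_sum_abs _ _) ?_
    rw [← hQsplit i]
    refine Finset.sum_le_sum (fun j _ => ?_)
    rw [abs_mul, abs_of_nonneg (hQ0 i j)]
    have h1 := abs_sign_le' (em i j)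
    nlinarith [hQ0 i j]
  have hθle : ∀ i, |θ i| ≤ 1 := by
    intro i; simp only [hθdef]
    split
    · norm_num
    · rw [abs_neg]; exact abs_sign_le' _
  -- the identity d = ∑ T
  have hA : (∑ i, ∑ j, Real.sign (φ i j) * (-(mu i j * φ i j) - P i j * (lam i * abar i - δ i)))
      = -(∑ i, colWh mu φ i) - ∑ i, ((lam i * abar i - δ i) * rowS P φ i) := by
    simp only [colWh, rowS]
    calc ∑ i, ∑ j, Real.sign (φ i j) * (-(mu i j * φ i j) - P i j * (lam i * abar i - δ i))
        = ∑ i, ∑ j, (-(mu i j * |φ i j|)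
            - (lam i * abar i - δ i) * (P i j * Real.sign (φ i j))) := by
          refine Finset.sum_congr rfl (fun i _ => Finset.sum_congr rfl (fun j _ => ?_))
          rw [← sign_mul_self' (φ i j)]; ring
      _ = (∑ i, ∑ j, -(mu i j * |φ i j|))
            - ∑ i, ∑ j, (lam i * abar i - δ i) * (P i j * Real.sign (φ i j)) := by
          rw [← Finset.sum_sub_distrib]
          exact Finset.sum_congr rfl (fun i _ => by rw [← Finset.sum_sub_distrib])
      _ = -(∑ i, ∑ k, mu k i * |φ k i|)
            - ∑ i, ((lam i * abar i - δ i) * ∑ j, P i j * Real.sign (φ i j)) := by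
          congr 1
          · rw [← Finset.sum_neg_distrib, Finset.sum_comm]
            exact Finset.sum_congr rfl (fun i _ => by rw [← Finset.sum_neg_distrib])
          · exact Finset.sum_congr rfl (fun i _ => by rw [Finset.mul_sum])
  have hB : (∑ i, ∑ j ∈ Finset.univ.filter (fun j => j ≠ i),
        Real.sign (em i j) * (-(mu i j * em i j) + Q i j * colW mu φ i))
      = -(∑ i, colRh mu em i) + ∑ i, colW mu φ i * rowK Q em i := by
    simp only [colRh, rowK]
    calc ∑ i, ∑ j ∈ Finset.univ.filter (fun j => j ≠ i),
          Real.sign (em i j) * (-(mu i j * em i j) + Q i j * colW mu φ i)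
        = ∑ i, ∑ j ∈ Finset.univ.filter (fun j => j ≠ i),
            (-(mu i j * |em i j|) + colW mu φ i * (Q i j * Real.sign (em i j))) := by
          refine Finset.sum_congr rfl (fun i _ => Finset.sum_congr rfl (fun j _ => ?_))
          rw [← sign_mul_self' (em i j)]; ring
      _ = (∑ i, ∑ j ∈ Finset.univ.filter (fun j => j ≠ i), -(mu i j * |em i j|))
          + ∑ i, ∑ j ∈ Finset.univ.filter (fun j => j ≠ i),
              colW mu φ i * (Q i j * Real.sign (em i j)) := by
          rw [← Finset.sum_add_distrib]
          exact Finset.sum_congr rfl (fun i _ => by rw [← Finset.sum_add_distrib])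
      _ = -(∑ i, ∑ k ∈ Finset.univ.filter (fun k => k ≠ i), mu k i * |em k i|)
          + ∑ i, (colW mu φ i * ∑ j ∈ Finset.univ.filter (fun j => j ≠ i),
              Q i j * Real.sign (em i j)) := by
          congr 1
          · rw [sum_offdiag_comm (fun i j => -(mu i j * |em i j|)), ← Finset.sum_neg_distrib]
            exact Finset.sum_congr rfl (fun i _ => by rw [← Finset.sum_neg_distrib])
          · exact Finset.sum_congr rfl (fun i _ => by rw [Finset.mul_sum])
  have hC := sum_theta abar (fun i => (habar i).2) (dE lam mu Q abar δ φ em) sm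
  have hId : d = ∑ i, T i := by
    have h7 : ∑ i, T i
        = (∑ i, -((lam i * abar i - δ i) * rowS P φ i)) - (∑ i, colWh mu φ i)
          - (∑ i, colRh mu em i) + (∑ i, colW mu φ i * rowK Q em i)
          + ∑ i, θ i * dE lam mu Q abar δ φ em i := by
      simp only [hTdef]
      rw [Finset.sum_add_distrib, Finset.sum_add_distrib, Finset.sum_sub_distrib,
        Finset.sum_sub_distrib]
    have h8 : ∑ i, (if abar i < 1 then (1:ℝ) else -sm) * dE lam mu Q abar δ φ em i
        = ∑ i, θ i * dE lam mu Q abar δ φ em i := by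
      refine Finset.sum_congr rfl (fun i _ => ?_)
      simp only [hθdef]
    rw [hd, hA, hB, h7]
    rw [h8] at hC
    have h9 : ∑ i, -((lam i * abar i - δ i) * rowS P φ i)
        = -∑ i, ((lam i * abar i - δ i) * rowS P φ i) := Finset.sum_neg_distrib _
    linarith [hC, h9]
  -- pointwise nonpositivity
  have hcase : ∀ i, ((lam i * abar i - δ i) ≤ 0 ∧ (θ i = 1 ∨ (lam i * abar i - δ i) = 0))
      ∨ ((lam i * abar i - δ i) + colR mu em i + Q i i * colW mu φ i = 0) := by
    intro i
    rcases eq_or_lt_of_le (hxd0 i) with hx | hx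
    · right
      have := hde0 i hx.symm
      simpa [dE] using this
    · left
      have hδi := hδlam i hx
      constructor
      · have := (habar i).2
        nlinarith [hlam i]
      · by_cases ha : abar i < 1
        · left; simp only [hθdef]; rw [if_pos ha]
        · right
          have h1 : abar i = 1 := le_antisymm (habar i).2 (not_lt.1 ha)
          rw [h1, hδi]; ring
  have hT_le : ∀ i, T i ≤ 0 := by
    intro i
    simp only [hTdef]
    have := station_nonpos (hWle i) (hRle i) (hSle i) (hKle i) (hθle i) (hQd i) (hcase i)
    calc -((lam i * abar i - δ i) * rowS P φ i) - colWh mu φ i - colRh mu em i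
          + colW mu φ i * rowK Q em i + θ i * dE lam mu Q abar δ φ em i
        = -(lam i * abar i - δ i) * rowS P φ i - colWh mu φ i - colRh mu em i
          + colW mu φ i * rowK Q em i
          + θ i * ((lam i * abar i - δ i) + colR mu em i + Q i i * colW mu φ i) := by
          simp only [dE]; ring
      _ ≤ 0 := this
  constructor
  · rw [hId]
    exact Finset.sum_nonpos (fun i _ => hT_le i)
  -- strictness
  intro hd0
  rw [hId] at hd0
  have hT0 : ∀ i, T i = 0 := by
    intro i
    exact (Finset.sum_eq_zero_iff_of_nonpos (fun j _ => hT_le j)).1 hd0 i (Finset.mem_univ i)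
  -- tightness extraction
  have habs1 : ∀ (A : ℝ) (i : Fin r), |A| ≤ 1 → |A * Q i i + rowK Q em i| ≤ 1 := by
    intro A i hA
    calc |A * Q i i + rowK Q em i| ≤ |A * Q i i| + |rowK Q em i| := abs_add_le _ _
    _ = |A| * Q i i + |rowK Q em i| := by rw [abs_mul, abs_of_pos (hQd i)]
    _ ≤ 1 * Q i i + (1 - Q i i) :=
        add_le_add (mul_le_mul_of_nonneg_right hA (hQd i).le) (hKle i)
    _ = 1 := by ring
  set co : Fin r → ℝ := fun i => if xd i = 0 then rowS P φ i else θ i with hcodef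
  have hcole : ∀ i, |co i| ≤ 1 := by
    intro i; simp only [hcodef]; split
    · exact hSle i
    · exact hθle i
  have textract : ∀ i, (∀ k, k ≠ i → co i * em k i = |em k i|)
      ∧ (∀ k, (co i * Q i i + rowK Q em i) * φ k i = |φ k i|)
      ∧ (0 < xd i → (lam i * abar i - δ i) * (θ i - rowS P φ i) = 0) := by
    intro i
    have hTi := hT0 i
    simp only [hTdef, dE] at hTi
    by_cases hx : xd i = 0
    · have hcoi : co i = rowS P φ i := by simp only [hcodef]; rw [if_pos hx]
      have hz : (lam i * abar i - δ i) + colR mu em i + Q i i * colW mu φ i = 0 := by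
        have := hde0 i hx; simpa [dE] using this
      have hΔeq : lam i * abar i - δ i = -(colR mu em i + Q i i * colW mu φ i) := by linarith
      rw [hΔeq] at hTi
      have hsplit : (rowS P φ i * colR mu em i - colRh mu em i)
          + (colW mu φ i * (rowS P φ i * Q i i + rowK Q em i) - colWh mu φ i) = 0 := by
        linear_combination hTi
      have e1 : rowS P φ i * colR mu em i - colRh mu em i ≤ 0 := by
        have h5 := abs_mul_le' (hSle i) (hRle i); linarith
      have e2 : colW mu φ i * (rowS P φ i * Q i i + rowK Q em i) - colWh mu φ i ≤ 0 := by
        have hb : |rowS P φ i * Q i i + rowK Q em i| ≤ 1 := habs1 _ i (hSle i)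
        have h5 := abs_mul_le' (hWle i) hb; linarith
      have e1z : rowS P φ i * colR mu em i - colRh mu em i = 0 := by linarith
      have e2z : colW mu φ i * (rowS P φ i * Q i i + rowK Q em i) - colWh mu φ i = 0 := by
        linarith
      refine ⟨?_, ?_, ?_⟩
      · intro k hk
        rw [hcoi]
        have hmem : k ∈ Finset.univ.filter (fun k => k ≠ i) :=
          Finset.mem_filter.2 ⟨Finset.mem_univ _, hk⟩
        refine tight_entry (v := fun k => em k i) (hSle i) (fun k _ => hmu k i) ?_ k hmem
        simpa [colR, colRh] using e1z
      · intro k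
        rw [hcoi]
        refine tight_entry (v := fun k => φ k i) (habs1 _ i (hSle i)) (fun k _ => hmu k i) ?_ k (Finset.mem_univ k)
        have : (rowS P φ i * Q i i + rowK Q em i) * colW mu φ i - colWh mu φ i = 0 := by
          linear_combination e2z
        simpa [colW, colWh] using this
      · intro hpos; rw [hx] at hpos; exact absurd hpos (lt_irrefl 0)
    · have hxpos : 0 < xd i := lt_of_le_of_ne (hxd0 i) (Ne.symm hx)
      have hcoi : co i = θ i := by simp only [hcodef]; rw [if_neg hx]
      have hsplitA : (lam i * abar i - δ i) * (θ i - rowS P φ i)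
          + (θ i * colR mu em i - colRh mu em i)
          + (colW mu φ i * (rowK Q em i + θ i * Q i i) - colWh mu φ i) = 0 := by
        linear_combination hTi
      have hΔle : lam i * abar i - δ i ≤ 0 := by
        rw [hδlam i hxpos]
        nlinarith [hlam i, (habar i).2]
      have p1 : (lam i * abar i - δ i) * (θ i - rowS P φ i) ≤ 0 := by
        by_cases ha : abar i < 1
        · have hθi : θ i = 1 := by simp only [hθdef]; rw [if_pos ha]
          rw [hθi]
          apply mul_nonpos_of_nonpos_of_nonneg hΔle
          have := hSle i; rw [abs_le] at this; linarith [this.2]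
        · have h1 : abar i = 1 := le_antisymm (habar i).2 (not_lt.1 ha)
          have : lam i * abar i - δ i = 0 := by rw [h1, hδlam i hxpos]; ring
          rw [this, zero_mul]
      have p2 : θ i * colR mu em i - colRh mu em i ≤ 0 := by
        have h5 := abs_mul_le' (hθle i) (hRle i); linarith
      have p3 : colW mu φ i * (rowK Q em i + θ i * Q i i) - colWh mu φ i ≤ 0 := by
        have hb : |θ i * Q i i + rowK Q em i| ≤ 1 := habs1 _ i (hθle i)
        have hb2 : |rowK Q em i + θ i * Q i i| ≤ 1 := by rwa [add_comm] at hb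
        have h5 := abs_mul_le' (hWle i) hb2; linarith
      have p1z : (lam i * abar i - δ i) * (θ i - rowS P φ i) = 0 := by linarith
      have p2z : θ i * colR mu em i - colRh mu em i = 0 := by linarith
      have p3z : colW mu φ i * (rowK Q em i + θ i * Q i i) - colWh mu φ i = 0 := by linarith
      refine ⟨?_, ?_, fun _ => p1z⟩
      · intro k hk
        rw [hcoi]
        have hmem : k ∈ Finset.univ.filter (fun k => k ≠ i) :=
          Finset.mem_filter.2 ⟨Finset.mem_univ _, hk⟩
        refine tight_entry (v := fun k => em k i) (hθle i) (fun k _ => hmu k i) ?_ k hmem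
        simpa [colR, colRh] using p2z
      · intro k
        rw [hcoi]
        refine tight_entry (v := fun k => φ k i) (habs1 _ i (hθle i)) (fun k _ => hmu k i) ?_ k (Finset.mem_univ k)
        have : (θ i * Q i i + rowK Q em i) * colW mu φ i - colWh mu φ i = 0 := by
          linear_combination p3z
        simpa [colW, colWh] using this
  -- mass identity
  have hmass' : (∑ i, ∑ j, φ i j) + (∑ i, ∑ j ∈ Finset.univ.filter (fun j => j ≠ i), em i j)
      + ((∑ i ∈ Finset.univ.filter (fun i => abar i < 1), xd i) + (Mv - mv)) = 0 := by
    have hsplitd : ∑ i, (xd i - ebd i)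
        = (∑ i ∈ Finset.univ.filter (fun i => abar i < 1), (xd i - ebd i))
          + ∑ i ∈ Finset.univ.filter (fun i => abar i = 1), (xd i - ebd i) := by
      rw [← filter_eq_of_le abar (fun i => (habar i).2)]
      exact (Finset.sum_filter_add_sum_filter_not Finset.univ (fun i => abar i < 1) _).symm
    have h1 : ∑ i ∈ Finset.univ.filter (fun i => abar i < 1), (xd i - ebd i)
        = ∑ i ∈ Finset.univ.filter (fun i => abar i < 1), xd i := by
      refine Finset.sum_congr rfl (fun i hi => ?_)
      rw [hebd i (Finset.mem_filter.1 hi).2, sub_zero]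
    have h2 : ∑ i ∈ Finset.univ.filter (fun i => abar i = 1), (xd i - ebd i) = Mv - mv := by
      rw [Finset.sum_sub_distrib, hMv, hmv]
    rw [hsplitd, h1, h2] at hmass
    linarith
  -- C1 : a full row of equal signs is impossible
  have C1 : ∀ c : ℝ, (c = 1 ∨ c = -1) → ∀ i0 : Fin r, (∀ j, Real.sign (φ i0 j) = c) → False := by
    intro c hc i0 hrow
    have hcne : c ≠ 0 := by rcases hc with h|h <;> rw [h] <;> norm_num
    have hrow' : ∀ j, φ i0 j ≠ 0 ∧ c * φ i0 j = |φ i0 j| := by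
      intro j
      have hj := hrow j
      constructor
      · intro h0; rw [h0, Real.sign_zero] at hj; exact hcne hj.symm
      · rw [← hj]; exact sign_mul_self' _
    have hcol : ∀ j, co j = c ∧ (co j * Q j j + rowK Q em j) = c := by
      intro j
      have hφ0 := (hrow' j).1
      have halign := (hrow' j).2
      have hG := (textract j).2.1 i0
      have hGc : co j * Q j j + rowK Q em j = c := by
        have h3 : (co j * Q j j + rowK Q em j) * φ i0 j = c * φ i0 j := by rw [hG, halign]
        exact mul_right_cancel₀ hφ0 h3
      refine ⟨?_, hGc⟩
      rcases coeff_sign (hQd j) (hKle j) (hcole j) hG hφ0 with ⟨h1, h2⟩ | ⟨h1, h2⟩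
      · rcases hc with h|h
        · rw [h1, h]
        · exfalso; rw [h] at halign; rw [abs_of_pos h2] at halign; linarith
      · rcases hc with h|h
        · exfalso; rw [h, one_mul] at halign; rw [abs_of_neg h2] at halign; linarith
        · rw [h1, h]
    have alignφ : ∀ k j, c * φ k j = |φ k j| := by
      intro k j
      have h5 := (textract j).2.1 k
      rw [(hcol j).2] at h5; exact h5
    have alignem : ∀ k j, k ≠ j → c * em k j = |em k j| := by
      intro k j hk
      have h5 := (textract j).1 k hk
      rw [(hcol j).1] at h5; exact h5
    have hphisum : c * (∑ i, ∑ j, φ i j) = ∑ i, ∑ j, |φ i j| := by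
      rw [Finset.mul_sum]
      refine Finset.sum_congr rfl (fun i _ => ?_)
      rw [Finset.mul_sum]
      exact Finset.sum_congr rfl (fun j _ => alignφ i j)
    have hemsum : c * (∑ i, ∑ j ∈ Finset.univ.filter (fun j => j ≠ i), em i j)
        = ∑ i, ∑ j ∈ Finset.univ.filter (fun j => j ≠ i), |em i j| := by
      rw [Finset.mul_sum]
      refine Finset.sum_congr rfl (fun i _ => ?_)
      rw [Finset.mul_sum]
      refine Finset.sum_congr rfl (fun j hj => ?_)
      exact alignem i j (Ne.symm (Finset.mem_filter.1 hj).2)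
    have hpos : 0 < ∑ i, ∑ j, |φ i j| := by
      have h1 : 0 < |φ i0 i0| := abs_pos.2 (hrow' i0).1
      have h2 : ∀ i ∈ Finset.univ, (0:ℝ) ≤ ∑ j, |φ i j| :=
        fun i _ => Finset.sum_nonneg fun j _ => abs_nonneg _
      calc (0:ℝ) < ∑ j, |φ i0 j| :=
            lt_of_lt_of_le h1 (Finset.single_le_sum (f := fun j => |φ i0 j|)
              (fun j _ => abs_nonneg _) (Finset.mem_univ i0))
        _ ≤ ∑ i, ∑ j, |φ i j| := Finset.single_le_sum (f := fun i => ∑ j, |φ i j|) h2 (Finset.mem_univ i0)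
    have hemnn : (0:ℝ) ≤ ∑ i, ∑ j ∈ Finset.univ.filter (fun j => j ≠ i), |em i j| :=
      Finset.sum_nonneg fun i _ => Finset.sum_nonneg fun j _ => abs_nonneg _
    have h4 : c * (∑ i, ∑ j, φ i j)
        + c * (∑ i, ∑ j ∈ Finset.univ.filter (fun j => j ≠ i), em i j)
        + c * ((∑ i ∈ Finset.univ.filter (fun i => abar i < 1), xd i) + (Mv - mv)) = 0 := by
      linear_combination c * hmass'
    have hkey : c * ((∑ i ∈ Finset.univ.filter (fun i => abar i < 1), xd i) + (Mv - mv)) < 0 := by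
      linarith [hphisum, hemsum, hpos, hemnn]
    rcases hc with hc1 | hc1
    · rw [hc1, one_mul] at hkey
      have hxlt : (0:ℝ) ≤ ∑ i ∈ Finset.univ.filter (fun i => abar i < 1), xd i :=
        Finset.sum_nonneg fun i _ => hxd0 i
      have hMm : Mv - mv < 0 := by linarith
      have hsm1 : sm = 1 := by rw [hsmdef]; exact Real.sign_of_pos (by linarith)
      have hgroup0 : ∀ j, abar j = 1 → xd j = 0 := by
        intro j haj
        by_contra h0
        have hxj : 0 < xd j := lt_of_le_of_ne (hxd0 j) (Ne.symm h0)
        have hcoj : co j = θ j := by simp only [hcodef]; rw [if_neg hxj.ne']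
        have hθj : θ j = -sm := by
          simp only [hθdef]; rw [if_neg (by rw [haj]; exact lt_irrefl 1)]
        have h5 := (hcol j).1
        rw [hcoj, hθj, hsm1, hc1] at h5
        norm_num at h5
      have hM0 : Mv = 0 := by
        rw [hMv]
        exact Finset.sum_eq_zero fun j hj => hgroup0 j (Finset.mem_filter.1 hj).2
      obtain ⟨j0, hj0mem, hj0pos⟩ :
          ∃ j0 ∈ Finset.univ.filter (fun i => abar i = 1), 0 < ebd j0 := by
        by_contra h0
        push_neg at h0
        have : mv ≤ 0 := by rw [hmv]; exact Finset.sum_nonpos h0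
        linarith
      have haj0 : abar j0 = 1 := (Finset.mem_filter.1 hj0mem).2
      have hxj0 : xd j0 = 0 := hgroup0 j0 haj0
      have hcoj0 : co j0 = rowS P φ j0 := by simp only [hcodef]; rw [if_pos hxj0]
      have hSj0 : rowS P φ j0 = 1 := by
        have h5 := (hcol j0).1; rw [hcoj0, hc1] at h5; exact h5
      have hsfrow : ∀ j, Real.sign (φ j0 j) = 1 :=
        row_all_sign (fun j => hP j0 j) (hProw j0) (fun j => abs_sign_le' _) (Or.inl rfl)
          (by simpa [rowS] using hSj0)
      have hφj0 : 0 < φ j0 j0 := sign_eq_one_imp' (hsfrow j0)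
      have hWpos : 0 < colW mu φ j0 := by
        have hterm : ∀ k ∈ Finset.univ, (0:ℝ) ≤ mu k j0 * φ k j0 := by
          intro k _
          have h6 := alignφ k j0; rw [hc1, one_mul] at h6
          have h7 : 0 ≤ φ k j0 := by rw [h6]; exact abs_nonneg _
          exact mul_nonneg (hmu k j0).le h7
        calc (0:ℝ) < mu j0 j0 * φ j0 j0 := mul_pos (hmu j0 j0) hφj0
          _ ≤ colW mu φ j0 := Finset.single_le_sum (f := fun k => mu k j0 * φ k j0) hterm (Finset.mem_univ j0)
      have hRnn : 0 ≤ colR mu em j0 := by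
        refine Finset.sum_nonneg fun k hk => ?_
        have h6 := alignem k j0 (Finset.mem_filter.1 hk).2
        rw [hc1, one_mul] at h6
        have h7 : 0 ≤ em k j0 := by rw [h6]; exact abs_nonneg _
        exact mul_nonneg (hmu k j0).le h7
      have hz : (lam j0 * abar j0 - δ j0) + colR mu em j0 + Q j0 j0 * colW mu φ j0 = 0 := by
        have := hde0 j0 hxj0; simpa [dE] using this
      have hlt : lam j0 * abar j0 - δ j0 < 0 := by
        nlinarith [mul_pos (hQd j0) hWpos]
      rw [haj0, mul_one] at hlt
      linarith [hδle j0]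
    · rw [hc1] at hkey
      have hkey2 : 0 < (∑ i ∈ Finset.univ.filter (fun i => abar i < 1), xd i) + (Mv - mv) := by
        linarith
      have hclaim : ∀ j, 0 < xd j → abar j = 1 ∧ sm = 1 := by
        intro j hxj
        have hcoj : co j = θ j := by simp only [hcodef]; rw [if_neg hxj.ne']
        have hcoc := (hcol j).1
        rw [hcoj] at hcoc
        by_cases haj : abar j < 1
        · exfalso
          have h5 : θ j = 1 := by simp only [hθdef]; rw [if_pos haj]
          rw [h5, hc1] at hcoc; norm_num at hcoc
        · have haj1 : abar j = 1 := le_antisymm (habar j).2 (not_lt.1 haj)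
          have h5 : θ j = -sm := by simp only [hθdef]; rw [if_neg haj]
          rw [h5, hc1] at hcoc
          exact ⟨haj1, by linarith⟩
      by_cases hex : ∃ j, 0 < xd j
      · obtain ⟨j1, hj1⟩ := hex
        have hsm1 := (hclaim j1 hj1).2
        rw [hsmdef] at hsm1
        have hmM : 0 < mv - Mv := sign_eq_one_imp' hsm1
        have hfz : ∑ i ∈ Finset.univ.filter (fun i => abar i < 1), xd i = 0 := by
          refine Finset.sum_eq_zero (fun j hj => ?_)
          by_contra h0
          have hxj : 0 < xd j := lt_of_le_of_ne (hxd0 j) (Ne.symm h0)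
          have h5 := (hclaim j hxj).1
          have hlt := (Finset.mem_filter.1 hj).2
          rw [h5] at hlt; exact lt_irrefl 1 hlt
        linarith
      · push_neg at hex
        have h1 : ∑ i ∈ Finset.univ.filter (fun i => abar i < 1), xd i = 0 :=
          Finset.sum_eq_zero fun j _ => le_antisymm (hex j) (hxd0 j)
        have h2 : Mv = 0 := by
          rw [hMv]; exact Finset.sum_eq_zero fun j _ => le_antisymm (hex j) (hxd0 j)
        have h3 : 0 ≤ mv := by rw [hmv]; exact Finset.sum_nonneg fun j _ => hebd0 j
        linarith
  -- step A : stations with empty diagonal have zero column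
  have rowfull : ∀ i (c : ℝ), (c = 1 ∨ c = -1) → rowS P φ i = c → False := by
    intro i c hc hS
    exact C1 c hc i (row_all_sign (fun j => hP i j) (hProw i) (fun j => abs_sign_le' _) hc
      (by simpa [rowS] using hS))
  have stepA : ∀ i, xd i = 0 → (∀ k, φ k i = 0) ∧ (∀ k, k ≠ i → em k i = 0) := by
    intro i hxi
    have hcoi : co i = rowS P φ i := by simp only [hcodef]; rw [if_pos hxi]
    have hφ : ∀ k, φ k i = 0 := by
      intro k
      by_contra hk
      have hG := (textract i).2.1 k
      rcases coeff_sign (hQd i) (hKle i) (hcole i) hG hk with ⟨h1, _⟩ | ⟨h1, _⟩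
      · rw [hcoi] at h1; exact rowfull i 1 (Or.inl rfl) h1
      · rw [hcoi] at h1; exact rowfull i (-1) (Or.inr rfl) h1
    refine ⟨hφ, ?_⟩
    intro k hk
    by_contra hk0
    have ht := (textract i).1 k hk
    rw [hcoi] at ht
    have habs : |rowS P φ i| = 1 := by
      have h5 : |rowS P φ i * em k i| = |em k i| := by rw [ht, abs_abs]
      rw [abs_mul] at h5
      exact mul_right_cancel₀ (abs_ne_zero.2 hk0) (h5.trans (one_mul _).symm)
    rcases (abs_eq zero_le_one).1 habs with h1 | h1
    · exact rowfull i 1 (Or.inl rfl) h1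
    · exact rowfull i (-1) (Or.inr rfl) h1
  have stepB : ∀ i, 0 < xd i → abar i = 1 := by
    intro i hxi
    by_contra h0
    have haj : abar i < 1 := lt_of_le_of_ne (habar i).2 h0
    have hθi : θ i = 1 := by simp only [hθdef]; rw [if_pos haj]
    have hΔ : lam i * abar i - δ i < 0 := by
      rw [hδlam i hxi]
      nlinarith [hlam i]
    have h1 := (textract i).2.2 hxi
    rw [hθi] at h1
    have hS1 : rowS P φ i = 1 := by
      rcases mul_eq_zero.1 h1 with h | h
      · exfalso; exact hΔ.ne h
      · linarith
    exact rowfull i 1 (Or.inl rfl) hS1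
  have hΔ0 : ∀ i, lam i * abar i - δ i = 0 := by
    intro i
    rcases eq_or_lt_of_le (hxd0 i) with hx | hx
    · have hz : (lam i * abar i - δ i) + colR mu em i + Q i i * colW mu φ i = 0 := by
        have := hde0 i hx.symm; simpa [dE] using this
      have hWz : colW mu φ i = 0 := by
        simp only [colW]
        exact Finset.sum_eq_zero fun k _ => by rw [(stepA i hx.symm).1 k, mul_zero]
      have hRz : colR mu em i = 0 := by
        simp only [colR]
        refine Finset.sum_eq_zero fun k hk => ?_
        rw [(stepA i hx.symm).2 k (Finset.mem_filter.1 hk).2, mul_zero]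
      rw [hWz, hRz] at hz; linarith
    · rw [stepB i hx, hδlam i hx, mul_one]; ring
  -- main conclusion
  by_cases hZ : (∀ i j, φ i j = 0) ∧ (∀ i j, i ≠ j → em i j = 0)
  · exact ⟨hZ.1, hZ.2, hΔ0⟩
  exfalso
  have hcol4 : ∀ i, (∀ k, (-sm) * φ k i = |φ k i|) ∧ (∀ k, k ≠ i → (-sm) * em k i = |em k i|) := by
    intro i
    rcases eq_or_lt_of_le (hxd0 i) with hx | hx
    · have hA := stepA i hx.symm
      constructor
      · intro k; rw [hA.1 k]; simp
      · intro k hk; rw [hA.2 k hk]; simp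
    · have haj1 := stepB i hx
      have hcoi : co i = θ i := by simp only [hcodef]; rw [if_neg hx.ne']
      have hθi : θ i = -sm := by
        simp only [hθdef]; rw [if_neg (by rw [haj1]; exact lt_irrefl 1)]
      constructor
      · intro k
        by_cases hk : φ k i = 0
        · rw [hk]; simp
        · have hG := (textract i).2.1 k
          have hGco : co i * Q i i + rowK Q em i = co i := by
            rcases coeff_sign (hQd i) (hKle i) (hcole i) hG hk with ⟨h1, h2⟩ | ⟨h1, h2⟩
            · have h3 : (co i * Q i i + rowK Q em i) * φ k i = co i * φ k i := by
                rw [hG, abs_of_pos h2, h1, one_mul]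
              exact mul_right_cancel₀ hk h3
            · have h3 : (co i * Q i i + rowK Q em i) * φ k i = co i * φ k i := by
                rw [hG, abs_of_neg h2, h1]; ring
              exact mul_right_cancel₀ hk h3
          rw [hGco, hcoi, hθi] at hG
          exact hG
      · intro k hk
        have ht := (textract i).1 k hk
        rw [hcoi, hθi] at ht; exact ht
  have hex : (∃ i j, φ i j ≠ 0) ∨ (∃ i j, i ≠ j ∧ em i j ≠ 0) := by
    by_contra h
    push_neg at h
    exact hZ ⟨h.1, fun i j hij => h.2 i j hij⟩
  have hsmpm : -sm = 1 ∨ -sm = -1 := by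
    have habs : |(-sm)| = 1 := by
      rcases hex with ⟨i, j, hij⟩ | ⟨i, j, hij, hem⟩
      · have h5 := (hcol4 j).1 i
        have h6 : |(-sm) * φ i j| = |φ i j| := by rw [h5, abs_abs]
        rw [abs_mul] at h6
        exact mul_right_cancel₀ (abs_ne_zero.2 hij) (h6.trans (one_mul _).symm)
      · have h5 := (hcol4 j).2 i hij
        have h6 : |(-sm) * em i j| = |em i j| := by rw [h5, abs_abs]
        rw [abs_mul] at h6
        exact mul_right_cancel₀ (abs_ne_zero.2 hem) (h6.trans (one_mul _).symm)
    exact (abs_eq zero_le_one).1 habs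
  have hphisum : (-sm) * (∑ i, ∑ j, φ i j) = ∑ i, ∑ j, |φ i j| := by
    rw [Finset.mul_sum]
    refine Finset.sum_congr rfl (fun i _ => ?_)
    rw [Finset.mul_sum]
    exact Finset.sum_congr rfl (fun j _ => (hcol4 j).1 i)
  have hemsum : (-sm) * (∑ i, ∑ j ∈ Finset.univ.filter (fun j => j ≠ i), em i j)
      = ∑ i, ∑ j ∈ Finset.univ.filter (fun j => j ≠ i), |em i j| := by
    rw [Finset.mul_sum]
    refine Finset.sum_congr rfl (fun i _ => ?_)
    rw [Finset.mul_sum]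
    refine Finset.sum_congr rfl (fun j hj => ?_)
    exact (hcol4 j).2 i (Ne.symm (Finset.mem_filter.1 hj).2)
  have hposs : 0 < (∑ i, ∑ j, |φ i j|)
      + ∑ i, ∑ j ∈ Finset.univ.filter (fun j => j ≠ i), |em i j| := by
    have hnn1 : (0:ℝ) ≤ ∑ i, ∑ j, |φ i j| :=
      Finset.sum_nonneg fun i _ => Finset.sum_nonneg fun j _ => abs_nonneg _
    have hnn2 : (0:ℝ) ≤ ∑ i, ∑ j ∈ Finset.univ.filter (fun j => j ≠ i), |em i j| :=
      Finset.sum_nonneg fun i _ => Finset.sum_nonneg fun j _ => abs_nonneg _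
    rcases hex with ⟨i, j, hij⟩ | ⟨i, j, hij, hem⟩
    · have h1 : 0 < |φ i j| := abs_pos.2 hij
      have h2 : |φ i j| ≤ ∑ j, |φ i j| :=
        Finset.single_le_sum (f := fun j => |φ i j|) (fun j _ => abs_nonneg _) (Finset.mem_univ j)
      have h3 : (∑ j, |φ i j|) ≤ ∑ i, ∑ j, |φ i j| :=
        Finset.single_le_sum (f := fun i => ∑ j, |φ i j|)
          (fun i _ => Finset.sum_nonneg fun j _ => abs_nonneg _) (Finset.mem_univ i)
      linarith
    · have h1 : 0 < |em i j| := abs_pos.2 hem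
      have hjm : j ∈ Finset.univ.filter (fun k => k ≠ i) :=
        Finset.mem_filter.2 ⟨Finset.mem_univ _, Ne.symm hij⟩
      have h2 : |em i j| ≤ ∑ k ∈ Finset.univ.filter (fun k => k ≠ i), |em i k| :=
        Finset.single_le_sum (f := fun k => |em i k|) (fun k _ => abs_nonneg _) hjm
      have h3 : (∑ k ∈ Finset.univ.filter (fun k => k ≠ i), |em i k|)
          ≤ ∑ i, ∑ j ∈ Finset.univ.filter (fun j => j ≠ i), |em i j| :=
        Finset.single_le_sum (f := fun i => ∑ j ∈ Finset.univ.filter (fun j => j ≠ i), |em i j|)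
          (fun i _ => Finset.sum_nonneg fun j _ => abs_nonneg _) (Finset.mem_univ i)
      linarith
  have h4 : (-sm) * (∑ i, ∑ j, φ i j)
      + (-sm) * (∑ i, ∑ j ∈ Finset.univ.filter (fun j => j ≠ i), em i j)
      + (-sm) * ((∑ i ∈ Finset.univ.filter (fun i => abar i < 1), xd i) + (Mv - mv)) = 0 := by
    linear_combination (-sm) * hmass'
  have hfilterz : ∑ i ∈ Finset.univ.filter (fun i => abar i < 1), xd i = 0 := by
    refine Finset.sum_eq_zero (fun j hj => ?_)
    rcases eq_or_lt_of_le (hxd0 j) with hx | hx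
    · exact hx.symm
    · exfalso
      have h5 := stepB j hx
      have hlt := (Finset.mem_filter.1 hj).2
      rw [h5] at hlt; exact lt_irrefl 1 hlt
  have hkey : (-sm) * (Mv - mv) < 0 := by
    have := h4
    rw [hfilterz, zero_add] at this
    linarith [hphisum, hemsum, hposs]
  rcases hsmpm with h | h
  · rw [h, one_mul] at hkey
    have hsm : sm = -1 := by linarith
    rw [hsmdef] at hsm
    have := sign_eq_neg_one_imp' hsm
    linarith
  · rw [h] at hkey
    have hsm : sm = 1 := by linarith
    rw [hsmdef] at hsm
    have := sign_eq_one_imp' hsm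
    linarith


set_option maxHeartbeats 1600000 in
theorem stmt_13 {r : ℕ} (hr : 1 ≤ r) (np : NetParams r)
    (Q : Mat r) (hQ : IsRouting Q)
    (hP : ∀ i j, 0 < np.P i j) (hQd : ∀ i, 0 < Q i i)
    (e f : ℝ → Mat r) (u : ℝ → Fin r → ℝ)
    (hsol : IsFluidSol np Q e f u)
    (ebar fbar : Mat r) (abar : Fin r → ℝ)
    (hmem : MemT ebar fbar)
    (habar : ∀ i, 0 ≤ abar i ∧ abar i ≤ 1)
    (heq1 : ∀ i j, np.lam i * np.P i j * abar i = np.mu i j * fbar i j)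
    (heq2 : ∀ i j, i ≠ j → np.mu i j * ebar i j = Q i j * ∑ k, np.mu k i * fbar k i)
    (heq3 : ∀ i, np.lam i * abar i =
      (∑ k ∈ Finset.univ.filter (fun k => k ≠ i), np.mu k i * ebar k i)
        + Q i i * ∑ k, np.mu k i * fbar k i)
    (heq4 : ∀ i, (1 - abar i) * ebar i i = 0)
    (t : ℝ) (ht : 0 < t)
    (hreg_diag : ∀ i, DifferentiableAt ℝ (fun s => e s i i) t)
    (hreg_f : ∀ i j, DifferentiableAt ℝ (fun s => |f s i j - fbar i j|) t)
    (hreg_e : ∀ i j, i ≠ j → DifferentiableAt ℝ (fun s => |e s i j - ebar i j|) t)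
    (hreg_m : DifferentiableAt ℝ (fun s =>
      |(∑ i ∈ Finset.univ.filter (fun i => abar i = 1), ebar i i)
        - ∑ i ∈ Finset.univ.filter (fun i => abar i = 1), e s i i|) t) :
    ∃ d : ℝ, HasDerivAt (fun s => lyapV ebar fbar abar (e s) (f s)) d t ∧
      d ≤ 0 ∧ ((e t, f t) ∉ eqSet np Q → d < 0) := by
  classical
  have hIci : Set.Ici (0:ℝ) ∈ 𝓝 t := Ici_mem_nhds ht
  set de : Fin r → ℝ := fun i => deriv (fun s => e s i i) t with hdedef
  have hde : ∀ i, HasDerivAt (fun s => e s i i) (de i) t := fun i => (hreg_diag i).hasDerivAt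
  set δf : Fin r → ℝ := fun i => -de i
      + (∑ j ∈ Finset.univ.filter (fun j => j ≠ i), np.mu j i * e t j i)
      + Q i i * ∑ j, np.mu j i * f t j i with hδdef
  have hFTCf : ∀ i j, HasDerivAt (fun s => ∫ x in (0:ℝ)..s, f x i j) (f t i j) t :=
    fun i j => ftc_deriv' (hsol.cont_f i j) ht
  have hFTCe : ∀ i j, HasDerivAt (fun s => ∫ x in (0:ℝ)..s, e x i j) (e t i j) t :=
    fun i j => ftc_deriv' (hsol.cont_e i j) ht
  -- derivative of lam i * (s - u s i)
  have hw : ∀ i, HasDerivAt (fun s => np.lam i * (s - u s i)) (δf i) t := by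
    intro i
    have hrhs : HasDerivAt (fun s => e 0 i i - e s i i
        + (∑ j ∈ Finset.univ.filter (fun j => j ≠ i), np.mu j i * ∫ x in (0:ℝ)..s, e x j i)
        + Q i i * ∑ j, np.mu j i * ∫ x in (0:ℝ)..s, f x j i)
        ((0 - de i
          + ∑ j ∈ Finset.univ.filter (fun j => j ≠ i), np.mu j i * e t j i)
          + Q i i * ∑ j, np.mu j i * f t j i) t := by
      refine HasDerivAt.add ?_ ?_
      · refine HasDerivAt.add ?_ ?_
        · exact (hasDerivAt_const t (e 0 i i)).sub (hde i)
        · exact HasDerivAt.fun_sum (fun j _ => (hFTCe j i).const_mul (np.mu j i))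
      · exact ((HasDerivAt.fun_sum (fun j _ => (hFTCf j i).const_mul (np.mu j i))).const_mul (Q i i))
    have hval : (0 - de i
        + ∑ j ∈ Finset.univ.filter (fun j => j ≠ i), np.mu j i * e t j i)
        + Q i i * ∑ j, np.mu j i * f t j i = δf i := by
      simp only [hδdef]; ring
    rw [hval] at hrhs
    refine hrhs.congr_of_eventuallyEq ?_
    filter_upwards [hIci] with s hs
    have h1 := hsol.eq_e_diag i s hs
    linarith
  have hlamne : ∀ i, np.lam i ≠ 0 := fun i => (np.lam_pos i).ne'
  have hsu : ∀ i, HasDerivAt (fun s => s - u s i) ((np.lam i)⁻¹ * δf i) t := by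
    intro i
    have h3 := (hw i).const_mul (np.lam i)⁻¹
    have h2 : (fun s => (np.lam i)⁻¹ * (np.lam i * (s - u s i))) = fun s => s - u s i :=
      funext fun s => inv_mul_cancel_left₀ (hlamne i) _
    rwa [h2] at h3
  have hu : ∀ i, HasDerivAt (fun s => u s i) (1 - (np.lam i)⁻¹ * δf i) t := by
    intro i
    have h3 := (hasDerivAt_id t).sub (hsu i)
    exact h3.congr_of_eventuallyEq (Filter.Eventually.of_forall (fun s => by simp only [Pi.sub_apply, id_eq]; ring))
  have hδle : ∀ i, δf i ≤ np.lam i := by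
    intro i
    have h0 := mono_hasDerivAt_nonneg' (hsol.u_mono i) (hu i)
    have h1 : (np.lam i)⁻¹ * δf i ≤ 1 := by linarith
    have h2 := mul_le_mul_of_nonneg_left h1 (np.lam_pos i).le
    rwa [mul_inv_cancel_left₀ (hlamne i), mul_one] at h2
  have hδeq : ∀ i, 0 < e t i i → δf i = np.lam i := by
    intro i hpos
    have hmono := hsol.u_mono i
    have hint := hsol.compl i
    have hls : lsMeasure (fun s => u s i) = hmono.stieltjesFunction.measure := by
      simp only [lsMeasure, dif_pos hmono]
    rw [hls] at hint
    have h0 := hasDerivAt_zero_of_lintegral_zero hmono ht (hreg_diag i).continuousAt hpos hint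
    have h1 := (hu i).unique h0
    have h2 : (np.lam i)⁻¹ * δf i = 1 := by linarith
    have h3 := congrArg (np.lam i * ·) h2
    simpa [mul_inv_cancel_left₀ (hlamne i)] using h3
  have hde0' : ∀ i, e t i i = 0 → de i = 0 := by
    intro i h0
    have hmin : IsLocalMin (fun s => e s i i) t := by
      show ∀ᶠ s in 𝓝 t, (fun s => e s i i) t ≤ (fun s => e s i i) s
      filter_upwards [hIci] with s hs
      simp only [h0]
      exact ((hsol.mem_T s hs).1 i i).1
    exact hmin.deriv_eq_zero
  -- derivative of f and off-diagonal e
  have hf' : ∀ i j, HasDerivAt (fun s => f s i j) (np.P i j * δf i - np.mu i j * f t i j) t := by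
    intro i j
    have hrhs : HasDerivAt (fun s => f 0 i j + np.lam i * np.P i j * (s - u s i)
        - np.mu i j * ∫ x in (0:ℝ)..s, f x i j)
        (0 + np.lam i * np.P i j * ((np.lam i)⁻¹ * δf i) - np.mu i j * f t i j) t := by
      refine HasDerivAt.sub ?_ ((hFTCf i j).const_mul (np.mu i j))
      exact (hasDerivAt_const t (f 0 i j)).add ((hsu i).const_mul (np.lam i * np.P i j))
    have hval : 0 + np.lam i * np.P i j * ((np.lam i)⁻¹ * δf i) - np.mu i j * f t i j
        = np.P i j * δf i - np.mu i j * f t i j := by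
      have h9 : np.lam i * np.P i j * ((np.lam i)⁻¹ * δf i) = np.P i j * δf i := by
        rw [show np.lam i * np.P i j * ((np.lam i)⁻¹ * δf i)
            = np.P i j * (np.lam i * ((np.lam i)⁻¹ * δf i)) from by ring,
          mul_inv_cancel_left₀ (hlamne i)]
      linarith
    rw [hval] at hrhs
    refine hrhs.congr_of_eventuallyEq ?_
    filter_upwards [hIci] with s hs
    exact hsol.eq_f i j s hs
  have he' : ∀ i j, i ≠ j → HasDerivAt (fun s => e s i j)
      (-(np.mu i j * e t i j) + Q i j * ∑ k, np.mu k i * f t k i) t := by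
    intro i j hij
    have hrhs : HasDerivAt (fun s => e 0 i j - np.mu i j * (∫ x in (0:ℝ)..s, e x i j)
        + Q i j * ∑ k, np.mu k i * ∫ x in (0:ℝ)..s, f x k i)
        (0 - np.mu i j * e t i j + Q i j * ∑ k, np.mu k i * f t k i) t := by
      refine HasDerivAt.add ?_ ?_
      · exact (hasDerivAt_const t (e 0 i j)).sub ((hFTCe i j).const_mul (np.mu i j))
      · exact (HasDerivAt.fun_sum (fun k _ => (hFTCf k i).const_mul (np.mu k i))).const_mul (Q i j)
    have hval : 0 - np.mu i j * e t i j + Q i j * ∑ k, np.mu k i * f t k i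
        = -(np.mu i j * e t i j) + Q i j * ∑ k, np.mu k i * f t k i := by ring
    rw [hval] at hrhs
    refine hrhs.congr_of_eventuallyEq ?_
    filter_upwards [hIci] with s hs
    exact hsol.eq_e_off i j hij s hs
  -- difference matrices
  set φm : Fin r → Fin r → ℝ := fun i j => f t i j - fbar i j with hφdef
  set emm : Fin r → Fin r → ℝ := fun i j => e t i j - ebar i j with hemdef
  have hmemT := hsol.mem_T t ht.le
  have hS2 : ∀ i, (∑ k, np.mu k i * f t k i)
      = colW np.mu φm i + ∑ k, np.mu k i * fbar k i := by
    intro i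
    simp only [colW, hφdef]
    rw [← Finset.sum_add_distrib]
    exact Finset.sum_congr rfl fun k _ => by ring
  have hS1 : ∀ i, (∑ j ∈ Finset.univ.filter (fun j => j ≠ i), np.mu j i * e t j i)
      = colR np.mu emm i + ∑ j ∈ Finset.univ.filter (fun j => j ≠ i), np.mu j i * ebar j i := by
    intro i
    simp only [colR, hemdef]
    rw [← Finset.sum_add_distrib]
    exact Finset.sum_congr rfl fun k _ => by ring
  have hId3 : ∀ i, de i = dE np.lam np.mu Q abar δf φm emm i := by
    intro i
    have hδi : δf i = -de i
        + (∑ j ∈ Finset.univ.filter (fun j => j ≠ i), np.mu j i * e t j i)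
        + Q i i * ∑ j, np.mu j i * f t j i := by simp only [hδdef]
    simp only [dE]
    linear_combination hδi + hS1 i + (Q i i) * hS2 i - heq3 i
  have hde0k : ∀ i, e t i i = 0 → dE np.lam np.mu Q abar δf φm emm i = 0 := by
    intro i h0
    rw [← hId3 i]
    exact hde0' i h0
  have hebd' : ∀ i, abar i < 1 → ebar i i = 0 := by
    intro i hi
    rcases mul_eq_zero.1 (heq4 i) with h | h
    · exfalso; linarith
    · exact h
  have hmasssplit : ∀ (A : Fin r → Fin r → ℝ), ∑ i, ∑ j, A i j
      = (∑ i, ∑ j ∈ Finset.univ.filter (fun j => j ≠ i), A i j) + ∑ i, A i i := by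
    intro A
    rw [← Finset.sum_add_distrib]
    refine Finset.sum_congr rfl fun i _ => ?_
    have h0 := Finset.sum_filter_add_sum_filter_not Finset.univ (fun j => j ≠ i) (A i)
    have h1 : Finset.univ.filter (fun j : Fin r => ¬ j ≠ i) = {i} := by ext j; simp [not_not]
    rw [h1, Finset.sum_singleton] at h0
    linarith
  have hmass0 : (∑ i, ∑ j, φm i j)
      + (∑ i, ∑ j ∈ Finset.univ.filter (fun j => j ≠ i), emm i j)
      + (∑ i, (e t i i - ebar i i)) = 0 := by
    have ha := hmemT.2.2
    have hb := hmem.2.2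
    have hφs : ∑ i, ∑ j, φm i j = (∑ i, ∑ j, f t i j) - ∑ i, ∑ j, fbar i j := by
      simp only [hφdef]
      rw [← Finset.sum_sub_distrib]
      exact Finset.sum_congr rfl fun i _ => by rw [← Finset.sum_sub_distrib]
    have hems : ∑ i, ∑ j, emm i j = (∑ i, ∑ j, e t i j) - ∑ i, ∑ j, ebar i j := by
      simp only [hemdef]
      rw [← Finset.sum_sub_distrib]
      exact Finset.sum_congr rfl fun i _ => by rw [← Finset.sum_sub_distrib]
    have hsp := hmasssplit emm
    have hdiag : ∑ i, emm i i = ∑ i, (e t i i - ebar i i) := by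
      exact Finset.sum_congr rfl fun i _ => by simp only [hemdef]
    have hsplit_a : ∑ i, ∑ j, (e t i j + f t i j)
        = (∑ i, ∑ j, e t i j) + ∑ i, ∑ j, f t i j := by
      rw [← Finset.sum_add_distrib]
      exact Finset.sum_congr rfl fun i _ => by rw [← Finset.sum_add_distrib]
    have hsplit_b : ∑ i, ∑ j, (ebar i j + fbar i j)
        = (∑ i, ∑ j, ebar i j) + ∑ i, ∑ j, fbar i j := by
      rw [← Finset.sum_add_distrib]
      exact Finset.sum_congr rfl fun i _ => by rw [← Finset.sum_add_distrib]
    rw [hsplit_a] at ha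
    rw [hsplit_b] at hb
    linarith [hφs, hems, hsp, hdiag]
  -- the derivative value
  set dval : ℝ := (∑ i, ∑ j, Real.sign (f t i j - fbar i j)
        * (np.P i j * δf i - np.mu i j * f t i j))
      + (∑ i, ∑ j ∈ Finset.univ.filter (fun j => j ≠ i),
          Real.sign (e t i j - ebar i j)
            * (-(np.mu i j * e t i j) + Q i j * ∑ k, np.mu k i * f t k i))
      + (∑ i ∈ Finset.univ.filter (fun i => abar i < 1), de i)
      + Real.sign ((∑ i ∈ Finset.univ.filter (fun i => abar i = 1), ebar i i)
            - ∑ i ∈ Finset.univ.filter (fun i => abar i = 1), e t i i)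
          * (- ∑ i ∈ Finset.univ.filter (fun i => abar i = 1), de i) with hdval
  have hdkey : dval
      = (∑ i, ∑ j, Real.sign (φm i j)
          * (-(np.mu i j * φm i j) - np.P i j * (np.lam i * abar i - δf i)))
      + (∑ i, ∑ j ∈ Finset.univ.filter (fun j => j ≠ i),
          Real.sign (emm i j) * (-(np.mu i j * emm i j) + Q i j * colW np.mu φm i))
      + (∑ i ∈ Finset.univ.filter (fun i => abar i < 1), dE np.lam np.mu Q abar δf φm emm i)
      + Real.sign ((∑ i ∈ Finset.univ.filter (fun i => abar i = 1), ebar i i)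
            - ∑ i ∈ Finset.univ.filter (fun i => abar i = 1), e t i i)
          * (- ∑ i ∈ Finset.univ.filter (fun i => abar i = 1),
              dE np.lam np.mu Q abar δf φm emm i) := by
    rw [hdval]
    congr 1
    · congr 1
      · congr 1
        · refine Finset.sum_congr rfl fun i _ => Finset.sum_congr rfl fun j _ => ?_
          simp only [hφdef]
          congr 1
          linear_combination heq1 i j
        · refine Finset.sum_congr rfl fun i _ => Finset.sum_congr rfl fun j hj => ?_
          have hij : i ≠ j := fun h => (Finset.mem_filter.1 hj).2 h.symm
          simp only [hemdef, colW, hφdef]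
          congr 1
          have hsub : ∑ k, np.mu k i * (f t k i - fbar k i)
              = (∑ k, np.mu k i * f t k i) - ∑ k, np.mu k i * fbar k i := by
            rw [← Finset.sum_sub_distrib]
            exact Finset.sum_congr rfl fun k _ => by ring
          linear_combination (-(Q i j)) * hsub - heq2 i j hij
      · exact Finset.sum_congr rfl fun i _ => hId3 i
    · congr 1
      rw [neg_inj]
      exact Finset.sum_congr rfl fun i _ => hId3 i
  obtain ⟨hdle, hdstrict⟩ := key_alg np.lam np.mu np.P Q abar δf
    (fun i => e t i i) (fun i => ebar i i) φm emm
    np.lam_pos np.mu_pos hP np.P_rowsum hQ.2 hQ.1 hQd habar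
    (fun i => (hmemT.1 i i).1) (fun i => (hmem.1 i i).1) hebd'
    hmass0 hδeq hδle hde0k dval hdkey
  refine ⟨dval, ?_, hdle, ?_⟩
  · -- HasDerivAt
    have h1 : HasDerivAt (fun s => ∑ i, ∑ j, |f s i j - fbar i j|)
        (∑ i, ∑ j, Real.sign (f t i j - fbar i j)
          * (np.P i j * δf i - np.mu i j * f t i j)) t := by
      refine HasDerivAt.fun_sum (fun i _ => HasDerivAt.fun_sum (fun j _ => ?_))
      exact abs_hasDerivAt' ((hf' i j).sub_const (fbar i j)) (hreg_f i j)
    have h2 : HasDerivAt (fun s => ∑ i, ∑ j ∈ Finset.univ.filter (fun j => j ≠ i),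
          |e s i j - ebar i j|)
        (∑ i, ∑ j ∈ Finset.univ.filter (fun j => j ≠ i),
          Real.sign (e t i j - ebar i j)
            * (-(np.mu i j * e t i j) + Q i j * ∑ k, np.mu k i * f t k i)) t := by
      refine HasDerivAt.fun_sum (fun i _ => HasDerivAt.fun_sum (fun j hj => ?_))
      have hij : i ≠ j := fun h => (Finset.mem_filter.1 hj).2 h.symm
      exact abs_hasDerivAt' ((he' i j hij).sub_const (ebar i j)) (hreg_e i j hij)
    have h3 : HasDerivAt (fun s => ∑ i ∈ Finset.univ.filter (fun i => abar i < 1), e s i i)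
        (∑ i ∈ Finset.univ.filter (fun i => abar i < 1), de i) t :=
      HasDerivAt.fun_sum (fun i _ => hde i)
    have h4 : HasDerivAt (fun s =>
        |(∑ i ∈ Finset.univ.filter (fun i => abar i = 1), ebar i i)
          - ∑ i ∈ Finset.univ.filter (fun i => abar i = 1), e s i i|)
        (Real.sign ((∑ i ∈ Finset.univ.filter (fun i => abar i = 1), ebar i i)
            - ∑ i ∈ Finset.univ.filter (fun i => abar i = 1), e t i i)
          * (- ∑ i ∈ Finset.univ.filter (fun i => abar i = 1), de i)) t := by
      have hg : HasDerivAt (fun s =>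
          (∑ i ∈ Finset.univ.filter (fun i => abar i = 1), ebar i i)
            - ∑ i ∈ Finset.univ.filter (fun i => abar i = 1), e s i i)
          (0 - ∑ i ∈ Finset.univ.filter (fun i => abar i = 1), de i) t :=
        (hasDerivAt_const _ _).sub (HasDerivAt.fun_sum (fun i _ => hde i))
      rw [zero_sub] at hg
      exact abs_hasDerivAt' hg hreg_m
    have hcomb := ((h1.add h2).add h3).add h4
    have hfun : (fun s => lyapV ebar fbar abar (e s) (f s))
        = fun s => (∑ i, ∑ j, |f s i j - fbar i j|)
          + (∑ i, ∑ j ∈ Finset.univ.filter (fun j => j ≠ i), |e s i j - ebar i j|)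
          + (∑ i ∈ Finset.univ.filter (fun i => abar i < 1), e s i i)
          + |(∑ i ∈ Finset.univ.filter (fun i => abar i = 1), ebar i i)
              - ∑ i ∈ Finset.univ.filter (fun i => abar i = 1), e s i i| := rfl
    rw [hfun, hdval]
    exact hcomb
  · -- strictness
    intro hnotin
    by_contra hnot
    have hd0 : dval = 0 := le_antisymm hdle (not_lt.1 hnot)
    obtain ⟨hφ0, hem0, hΔ0⟩ := hdstrict hd0
    apply hnotin
    simp only [eqSet, Set.mem_setOf_eq]
    have hft : ∀ i j, f t i j = fbar i j := by
      intro i j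
      have h5 := hφ0 i j
      simp only [hφdef] at h5
      linarith
    have het : ∀ i j, i ≠ j → e t i j = ebar i j := by
      intro i j hij
      have h5 := hem0 i j hij
      simp only [hemdef] at h5
      linarith
    have hδa : ∀ i, δf i = np.lam i * abar i := by
      intro i
      have h5 := hΔ0 i
      linarith
    have hdeall : ∀ i, de i = 0 := by
      intro i
      rw [hId3 i]
      simp only [dE]
      have hW0 : colW np.mu φm i = 0 := by
        simp only [colW]
        exact Finset.sum_eq_zero fun k _ => by rw [hφ0 k i, mul_zero]
      have hR0 : colR np.mu emm i = 0 := by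
        simp only [colR]
        exact Finset.sum_eq_zero fun k hk => by
          rw [hem0 k i (Finset.mem_filter.1 hk).2, mul_zero]
      rw [hW0, hR0]
      have h5 := hΔ0 i
      linarith
    have hδ0 : ∀ i, 0 ≤ δf i := by
      intro i
      rcases eq_or_lt_of_le ((hmemT.1 i i).1) with hx | hx
      · have hdei := hde0' i hx.symm
        have hδi : δf i = -de i
            + (∑ j ∈ Finset.univ.filter (fun j => j ≠ i), np.mu j i * e t j i)
            + Q i i * ∑ j, np.mu j i * f t j i := by simp only [hδdef]
        rw [hδi, hdei]
        have hs1 : (0:ℝ) ≤ ∑ j ∈ Finset.univ.filter (fun j => j ≠ i), np.mu j i * e t j i :=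
          Finset.sum_nonneg fun j _ => mul_nonneg (np.mu_pos j i).le ((hmemT.1 j i).1)
        have hs2 : (0:ℝ) ≤ ∑ j, np.mu j i * f t j i :=
          Finset.sum_nonneg fun j _ => mul_nonneg (np.mu_pos j i).le ((hmemT.2.1 j i).1)
        have := mul_nonneg (hQ.1 i i) hs2
        linarith
      · rw [hδeq i hx]; exact (np.lam_pos i).le
    refine ⟨hmemT, fun i => δf i / np.lam i, ?_, ?_, ?_, ?_, ?_⟩
    · intro i
      constructor
      · exact div_nonneg (hδ0 i) (np.lam_pos i).le
      · rw [div_le_one (np.lam_pos i)]; exact hδle i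
    · intro i j
      dsimp only
      rw [hft i j, hδa i, mul_div_cancel_left₀ _ (hlamne i)]
      exact heq1 i j
    · intro i j hij
      rw [het i j hij]
      have hsum : (∑ k, np.mu k i * f t k i) = ∑ k, np.mu k i * fbar k i :=
        Finset.sum_congr rfl fun k _ => by rw [hft k i]
      rw [hsum]
      exact heq2 i j hij
    · intro i
      dsimp only
      have h1 : np.lam i * (δf i / np.lam i) = δf i := by
        rw [mul_comm, div_mul_cancel₀ _ (hlamne i)]
      rw [h1]
      have hsum : (∑ k ∈ Finset.univ.filter (fun k => k ≠ i), np.mu k i * e t k i)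
          = ∑ j ∈ Finset.univ.filter (fun j => j ≠ i), np.mu j i * e t j i := rfl
      have hδi : δf i = -de i
          + (∑ j ∈ Finset.univ.filter (fun j => j ≠ i), np.mu j i * e t j i)
          + Q i i * ∑ j, np.mu j i * f t j i := by simp only [hδdef]
      rw [hδi, hdeall i]
      ring
    · intro i
      dsimp only
      rcases eq_or_lt_of_le ((hmemT.1 i i).1) with hx | hx
      · rw [← hx, mul_zero]
      · rw [hδeq i hx, div_self (hlamne i)]
        ring
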